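/- Soundness of G(FOC+J): if the sequent Γ ⇒ Δ is derivable in the sequent calculus G(FOC+J), then the semantic consequence Γ ⊨ Δ holds, i.e., for every Kripke model, world w, and assignment, if all formulas in Γ are satisfied at w then some formula in Δ is satisfied at w. -/
import Mathlib


/-- Terms: variables (named by naturals) and constant symbols. -/
inductive Tm : Type
| var : ℕ → Tm
| const : ℕ → Tm
deriving DecidableEq

/-- Formulas of the combined language: atoms, ⊥, ∧, ∨, intuitionistic and
classical implication, intuitionistic and classical universal quantifier,
and the existential quantifier. -/
inductive Fm : Type
| atom : ℕ → List Tm → Fm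
| bot : Fm
| and : Fm → Fm → Fm
| or : Fm → Fm → Fm
| impI : Fm → Fm → Fm
| impC : Fm → Fm → Fm
| allI : ℕ → Fm → Fm
| allC : ℕ → Fm → Fm
| ex : ℕ → Fm → Fm
deriving DecidableEq

def Fm.top : Fm := .impI .bot .bot
def Fm.negC (A : Fm) : Fm := .impC A .bot
def Fm.negI (A : Fm) : Fm := .impI A .bot

def Tm.fv : Tm → Set ℕ
| .var x => {x}
| .const _ => ∅

/-- Free variables of a formula. -/
def Fm.fv : Fm → Set ℕ
| .atom _ ts => {x | ∃ t ∈ ts, x ∈ t.fv}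
| .bot => ∅
| .and A B => A.fv ∪ B.fv
| .or A B => A.fv ∪ B.fv
| .impI A B => A.fv ∪ B.fv
| .impC A B => A.fv ∪ B.fv
| .allI x A => A.fv \ {x}
| .allC x A => A.fv \ {x}
| .ex x A => A.fv \ {x}

/-- Bound variables of a formula. -/
def Fm.bv : Fm → Set ℕ
| .atom _ _ => ∅
| .bot => ∅
| .and A B => A.bv ∪ B.bv
| .or A B => A.bv ∪ B.bv
| .impI A B => A.bv ∪ B.bv
| .impC A B => A.bv ∪ B.bv
| .allI x A => insert x A.bv
| .allC x A => insert x A.bv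
| .ex x A => insert x A.bv

/-- All variables (free and bound) of a formula. -/
def Fm.vars : Fm → Set ℕ
| .atom _ ts => {x | ∃ t ∈ ts, x ∈ t.fv}
| .bot => ∅
| .and A B => A.vars ∪ B.vars
| .or A B => A.vars ∪ B.vars
| .impI A B => A.vars ∪ B.vars
| .impC A B => A.vars ∪ B.vars
| .allI x A => insert x A.vars
| .allC x A => insert x A.vars
| .ex x A => insert x A.vars

def Tm.subst (x : ℕ) (u : Tm) : Tm → Tm
| .var y => if y = x then u else .var y
| .const c => .const c

/-- Substitution of term `u` for variable `x` (under the standing assumption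
that bound and free variables are disjoint, this is clash-avoiding). -/
def Fm.subst : Fm → ℕ → Tm → Fm
| .atom P ts, x, u => .atom P (ts.map (Tm.subst x u))
| .bot, _, _ => .bot
| .and A B, x, u => .and (A.subst x u) (B.subst x u)
| .or A B, x, u => .or (A.subst x u) (B.subst x u)
| .impI A B, x, u => .impI (A.subst x u) (B.subst x u)
| .impC A B, x, u => .impC (A.subst x u) (B.subst x u)
| .allI y A, x, u => .allI y (if y = x then A else A.subst x u)
| .allC y A, x, u => .allC y (if y = x then A else A.subst x u)
| .ex y A, x, u => .ex y (if y = x then A else A.subst x u)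

/-- Persistent formulas: atoms, →ᵢ-formulas and ∀ᵢ-formulas. -/
def Fm.Persistent : Fm → Prop
| .atom _ _ => True
| .impI _ _ => True
| .allI _ _ => True
| _ => False

/-- Purely intuitionistic formulas (no →_c, no ∀_c). -/
def Fm.IsJ : Fm → Prop
| .atom _ _ => True
| .bot => True
| .and A B => A.IsJ ∧ B.IsJ
| .or A B => A.IsJ ∧ B.IsJ
| .impI A B => A.IsJ ∧ B.IsJ
| .impC _ _ => False
| .allI _ A => A.IsJ
| .allC _ _ => False
| .ex _ A => A.IsJ

/-- Purely classical formulas (no →ᵢ, no ∀ᵢ). -/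
def Fm.IsC : Fm → Prop
| .atom _ _ => True
| .bot => True
| .and A B => A.IsC ∧ B.IsC
| .or A B => A.IsC ∧ B.IsC
| .impI _ _ => False
| .impC A B => A.IsC ∧ B.IsC
| .allI _ _ => False
| .allC _ A => A.IsC
| .ex _ A => A.IsC

/-- A raw Kripke structure for the combined first-order language. -/
structure KModel (U : Type) where
  W : Type
  R : W → W → Prop
  D : W → Set U
  cI : ℕ → U
  V : ℕ → W → Set (List U)

/-- The conditions making a raw structure an intuitionistic Kripke model:
`R` is a preorder, domains are nonempty, monotone, with nonempty
intersection, constants are rigid (interpreted in every domain), and the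
predicate valuation is monotone (hereditary) along `R`. -/
structure KModel.IsKripke {U : Type} (M : KModel U) : Prop where
  wNonempty : Nonempty M.W
  refl : ∀ w, M.R w w
  trans : ∀ {w v u}, M.R w v → M.R v u → M.R w u
  dNonempty : ∀ w, (M.D w).Nonempty
  dMono : ∀ {w v}, M.R w v → M.D w ⊆ M.D v
  dInter : (⋂ w, M.D w).Nonempty
  cMem : ∀ c w, M.cI c ∈ M.D w
  vMono : ∀ P {w v}, M.R w v → M.V P w ⊆ M.V P v

def Tm.val {U : Type} (M : KModel U) (g : ℕ → U) : Tm → U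
| .var x => g x
| .const c => M.cI c

/-- Satisfaction of a formula at a world under an assignment. -/
def Fm.Sat {U : Type} (M : KModel U) : Fm → M.W → (ℕ → U) → Prop
| .atom P ts, w, g => ts.map (Tm.val M g) ∈ M.V P w
| .bot, _, _ => False
| .and A B, w, g => A.Sat M w g ∧ B.Sat M w g
| .or A B, w, g => A.Sat M w g ∨ B.Sat M w g
| .impI A B, w, g => ∀ v, M.R w v → A.Sat M v g → B.Sat M v g
| .impC A B, w, g => A.Sat M w g → B.Sat M w g
| .allI x A, w, g => ∀ v, M.R w v → ∀ d ∈ M.D v, A.Sat M v (Function.update g x d)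
| .allC x A, w, g => ∀ d ∈ M.D w, A.Sat M w (Function.update g x d)
| .ex x A, w, g => ∃ d ∈ M.D w, A.Sat M w (Function.update g x d)

/-- Multi-succedent semantic consequence: at every world of every Kripke
model, under any assignment into the domain, if all of `Γ` holds then some
member of `Δ` holds. -/
def Conseq (Γ Δ : List Fm) : Prop :=
  ∀ (U : Type) (M : KModel U), M.IsKripke → ∀ (w : M.W) (g : ℕ → U),
    (∀ x, g x ∈ M.D w) → (∀ A ∈ Γ, A.Sat M w g) → ∃ B ∈ Δ, B.Sat M w g

/-- The sequent calculus G(FOC+J). -/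
inductive Der : List Fm → List Fm → Prop
| id (A : Fm) : Der [A] [A]
| botL : Der [.bot] []
| perm {Γ Γ' Δ Δ'} : Γ.Perm Γ' → Δ.Perm Δ' → Der Γ Δ → Der Γ' Δ'
| wL {Γ Δ} (A) : Der Γ Δ → Der (A :: Γ) Δ
| wR {Γ Δ} (A) : Der Γ Δ → Der Γ (A :: Δ)
| cL {Γ Δ A} : Der (A :: A :: Γ) Δ → Der (A :: Γ) Δ
| cR {Γ Δ A} : Der Γ (A :: A :: Δ) → Der Γ (A :: Δ)
| cut {Γ Δ P S A} : Der Γ (A :: Δ) → Der (A :: P) S → Der (Γ ++ P) (Δ ++ S)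
| impIR {Θ A B} : (∀ C ∈ Θ, Fm.Persistent C) →
    Der (A :: Θ) [B] → Der Θ [.impI A B]
| impIL {Γ₁ Γ₂ Δ₁ Δ₂ A B} : Der Γ₁ (A :: Δ₁) → Der (B :: Γ₂) Δ₂ →
    Der (.impI A B :: (Γ₁ ++ Γ₂)) (Δ₁ ++ Δ₂)
| impCR {Γ Δ A B} : Der (A :: Γ) (B :: Δ) → Der Γ (.impC A B :: Δ)
| impCL {Γ₁ Γ₂ Δ₁ Δ₂ A B} : Der Γ₁ (A :: Δ₁) → Der (B :: Γ₂) Δ₂ →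
    Der (.impC A B :: (Γ₁ ++ Γ₂)) (Δ₁ ++ Δ₂)
| andR {Γ Δ A B} : Der Γ (A :: Δ) → Der Γ (B :: Δ) → Der Γ (.and A B :: Δ)
| andL1 {Γ Δ A B} : Der (A :: Γ) Δ → Der (.and A B :: Γ) Δ
| andL2 {Γ Δ A B} : Der (B :: Γ) Δ → Der (.and A B :: Γ) Δ
| orR1 {Γ Δ A B} : Der Γ (A :: Δ) → Der Γ (.or A B :: Δ)
| orR2 {Γ Δ A B} : Der Γ (B :: Δ) → Der Γ (.or A B :: Δ)
| orL {Γ Δ A B} : Der (A :: Γ) Δ → Der (B :: Γ) Δ → Der (.or A B :: Γ) Δ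
| allIR {Θ x z A} : (∀ C ∈ Θ, Fm.Persistent C) →
    (∀ C ∈ Θ, z ∉ Fm.fv C) → z ∉ Fm.fv (.allI x A) → z ∉ Fm.bv A →
    Der Θ [A.subst x (.var z)] → Der Θ [.allI x A]
| allIL {Γ Δ x A} (t : Tm) : (∀ y ∈ t.fv, y ∉ Fm.bv A) →
    Der (A.subst x t :: Γ) Δ → Der (.allI x A :: Γ) Δ
| allCR {Γ Δ x z A} : (∀ C ∈ Γ, z ∉ Fm.fv C) → (∀ C ∈ Δ, z ∉ Fm.fv C) →
    z ∉ Fm.fv (.allC x A) → z ∉ Fm.bv A →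
    Der Γ (A.subst x (.var z) :: Δ) → Der Γ (.allC x A :: Δ)
| allCL {Γ Δ x A} (t : Tm) : (∀ y ∈ t.fv, y ∉ Fm.bv A) →
    Der (A.subst x t :: Γ) Δ → Der (.allC x A :: Γ) Δ
| exR {Γ Δ x A} (t : Tm) : (∀ y ∈ t.fv, y ∉ Fm.bv A) →
    Der Γ (A.subst x t :: Δ) → Der Γ (.ex x A :: Δ)
| exL {Γ Δ x z A} : (∀ C ∈ Γ, z ∉ Fm.fv C) → (∀ C ∈ Δ, z ∉ Fm.fv C) →
    z ∉ Fm.fv (.ex x A) → z ∉ Fm.bv A →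
    Der (A.subst x (.var z) :: Γ) Δ → Der (.ex x A :: Γ) Δ

lemma tm_val_agree {U : Type} (M : KModel U) {g g' : ℕ → U} (t : Tm)
    (h : ∀ x ∈ t.fv, g x = g' x) : t.val M g = t.val M g' := by
  cases t with
  | var x => exact h x (by simp [Tm.fv])
  | const c => rfl

lemma sat_agree {U : Type} (M : KModel U) (A : Fm) : ∀ {g g' : ℕ → U} {w : M.W},
    (∀ x ∈ A.fv, g x = g' x) → (A.Sat M w g ↔ A.Sat M w g') := by
  induction A with
  | atom P ts =>
    intro g g' w h
    have : ts.map (Tm.val M g) = ts.map (Tm.val M g') := by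
      refine List.map_congr_left ?_
      intro t ht
      exact tm_val_agree M t (fun x hx => h x ⟨t, ht, hx⟩)
    simp [Fm.Sat, this]
  | bot => intro g g' w h; rfl
  | and A B ihA ihB =>
    intro g g' w h
    exact and_congr (ihA fun x hx => h x (Or.inl hx)) (ihB fun x hx => h x (Or.inr hx))
  | or A B ihA ihB =>
    intro g g' w h
    exact or_congr (ihA fun x hx => h x (Or.inl hx)) (ihB fun x hx => h x (Or.inr hx))
  | impI A B ihA ihB =>
    intro g g' w h
    exact forall₂_congr fun v _ =>
      imp_congr (ihA fun x hx => h x (Or.inl hx)) (ihB fun x hx => h x (Or.inr hx))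
  | impC A B ihA ihB =>
    intro g g' w h
    exact imp_congr (ihA fun x hx => h x (Or.inl hx)) (ihB fun x hx => h x (Or.inr hx))
  | allI y A ih =>
    intro g g' w h
    refine forall₂_congr fun v _ => forall₂_congr fun d _ => ih fun x hx => ?_
    by_cases hxy : x = y
    · subst hxy; simp
    · simp only [Function.update_apply, if_neg hxy]
      exact h x ⟨hx, hxy⟩
  | allC y A ih =>
    intro g g' w h
    refine forall₂_congr fun d _ => ih fun x hx => ?_
    by_cases hxy : x = y
    · subst hxy; simp
    · simp only [Function.update_apply, if_neg hxy]
      exact h x ⟨hx, hxy⟩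
  | ex y A ih =>
    intro g g' w h
    refine exists_congr fun d => and_congr_right fun _ => ih fun x hx => ?_
    by_cases hxy : x = y
    · subst hxy; simp
    · simp only [Function.update_apply, if_neg hxy]
      exact h x ⟨hx, hxy⟩

lemma tm_subst_val {U : Type} (M : KModel U) (g : ℕ → U) (x : ℕ) (u t : Tm) :
    (Tm.subst x u t).val M g = t.val M (Function.update g x (u.val M g)) := by
  cases t with
  | var y =>
    by_cases h : y = x
    · subst h; simp [Tm.subst, Tm.val]
    · simp [Tm.subst, Tm.val, h, Function.update_apply]
  | const c => rfl

lemma sat_subst {U : Type} (M : KModel U) (A : Fm) :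
    ∀ (x : ℕ) (u : Tm) (g : ℕ → U) (w : M.W),
    (∀ y ∈ u.fv, y ∉ A.bv) →
    ((A.subst x u).Sat M w g ↔ A.Sat M w (Function.update g x (u.val M g))) := by
  induction A with
  | atom P ts =>
    intro x u g w _
    have : (ts.map (Tm.subst x u)).map (Tm.val M g)
        = ts.map (Tm.val M (Function.update g x (u.val M g))) := by
      rw [List.map_map]
      refine List.map_congr_left fun t _ => ?_
      simp only [Function.comp_apply]
      exact tm_subst_val M g x u t
    simp [Fm.subst, Fm.Sat, this]
  | bot => intro x u g w _; rfl
  | and A B ihA ihB =>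
    intro x u g w h
    exact and_congr (ihA x u g w fun y hy => fun hb => h y hy (Or.inl hb))
      (ihB x u g w fun y hy hb => h y hy (Or.inr hb))
  | or A B ihA ihB =>
    intro x u g w h
    exact or_congr (ihA x u g w fun y hy hb => h y hy (Or.inl hb))
      (ihB x u g w fun y hy hb => h y hy (Or.inr hb))
  | impI A B ihA ihB =>
    intro x u g w h
    exact forall₂_congr fun v _ =>
      imp_congr (ihA x u g v fun y hy hb => h y hy (Or.inl hb))
        (ihB x u g v fun y hy hb => h y hy (Or.inr hb))
  | impC A B ihA ihB =>
    intro x u g w h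
    exact imp_congr (ihA x u g w fun y hy hb => h y hy (Or.inl hb))
      (ihB x u g w fun y hy hb => h y hy (Or.inr hb))
  | allI y A ih =>
    intro x u g w h
    by_cases hyx : y = x
    · subst hyx
      simp only [Fm.subst, if_pos rfl]
      refine sat_agree M (.allI y A) fun z hz => ?_
      have : z ≠ y := hz.2
      simp [Function.update_apply, this]
    · simp only [Fm.subst, if_neg hyx, Fm.Sat]
      refine forall₂_congr fun v hv => forall₂_congr fun d hd => ?_
      have hy_u : y ∉ u.fv := fun hy => h y hy (by simp [Fm.bv])
      have hbv : ∀ z ∈ u.fv, z ∉ A.bv := fun z hz hb => h z hz (by simp [Fm.bv, hb])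
      rw [ih x u (Function.update g y d) v hbv]
      have huval : u.val M (Function.update g y d) = u.val M g :=
        tm_val_agree M u fun z hz => by
          have : z ≠ y := fun e => hy_u (e ▸ hz)
          simp [Function.update_apply, this]
      rw [huval, Function.update_comm (fun e => hyx e.symm)]
  | allC y A ih =>
    intro x u g w h
    by_cases hyx : y = x
    · subst hyx
      simp only [Fm.subst, if_pos rfl]
      refine sat_agree M (.allC y A) fun z hz => ?_
      have : z ≠ y := hz.2
      simp [Function.update_apply, this]
    · simp only [Fm.subst, if_neg hyx, Fm.Sat]
      refine forall₂_congr fun d hd => ?_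
      have hy_u : y ∉ u.fv := fun hy => h y hy (by simp [Fm.bv])
      have hbv : ∀ z ∈ u.fv, z ∉ A.bv := fun z hz hb => h z hz (by simp [Fm.bv, hb])
      rw [ih x u (Function.update g y d) w hbv]
      have huval : u.val M (Function.update g y d) = u.val M g :=
        tm_val_agree M u fun z hz => by
          have : z ≠ y := fun e => hy_u (e ▸ hz)
          simp [Function.update_apply, this]
      rw [huval, Function.update_comm (fun e => hyx e.symm)]
  | ex y A ih =>
    intro x u g w h
    by_cases hyx : y = x
    · subst hyx
      simp only [Fm.subst, if_pos rfl]
      refine sat_agree M (.ex y A) fun z hz => ?_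
      have : z ≠ y := hz.2
      simp [Function.update_apply, this]
    · simp only [Fm.subst, if_neg hyx, Fm.Sat]
      refine exists_congr fun d => and_congr_right fun hd => ?_
      have hy_u : y ∉ u.fv := fun hy => h y hy (by simp [Fm.bv])
      have hbv : ∀ z ∈ u.fv, z ∉ A.bv := fun z hz hb => h z hz (by simp [Fm.bv, hb])
      rw [ih x u (Function.update g y d) w hbv]
      have huval : u.val M (Function.update g y d) = u.val M g :=
        tm_val_agree M u fun z hz => by
          have : z ≠ y := fun e => hy_u (e ▸ hz)
          simp [Function.update_apply, this]
      rw [huval, Function.update_comm (fun e => hyx e.symm)]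

lemma sat_mono {U : Type} {M : KModel U} (hM : M.IsKripke) {A : Fm}
    (hA : A.Persistent) {w v : M.W} {g : ℕ → U}
    (hR : M.R w v) (h : A.Sat M w g) : A.Sat M v g := by
  cases A with
  | atom P ts => exact hM.vMono P hR h
  | impI A B => exact fun u hu => h u (hM.trans hR hu)
  | allI x A => exact fun u hu => h u (hM.trans hR hu)
  | bot => exact hA.elim
  | and A B => exact hA.elim
  | or A B => exact hA.elim
  | impC A B => exact hA.elim
  | allC x A => exact hA.elim
  | ex x A => exact hA.elim

lemma tm_val_mem {U : Type} {M : KModel U} (hM : M.IsKripke) {g : ℕ → U}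
    {w : M.W} (hg : ∀ x, g x ∈ M.D w) (t : Tm) : t.val M g ∈ M.D w := by
  cases t with
  | var x => exact hg x
  | const c => exact hM.cMem c w

/-- soundness of G(FOC+J): every derivable sequent is a
semantic consequence. -/
theorem soundness {Γ Δ : List Fm} (h : Der Γ Δ) : Conseq Γ Δ := by
  induction h with
  | id A =>
    intro U M hM w g hg hsat
    exact ⟨A, by simp, hsat A (by simp)⟩
  | botL =>
    intro U M hM w g hg hsat
    exact absurd (hsat .bot (by simp)) (by simp [Fm.Sat])
  | perm hΓ hΔ _ ih =>
    intro U M hM w g hg hsat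
    obtain ⟨B, hB, hBs⟩ := ih U M hM w g hg fun A hA => hsat A (hΓ.mem_iff.mp hA)
    exact ⟨B, hΔ.mem_iff.mp hB, hBs⟩
  | wL A _ ih =>
    intro U M hM w g hg hsat
    exact ih U M hM w g hg fun B hB => hsat B (List.mem_cons_of_mem _ hB)
  | wR A _ ih =>
    intro U M hM w g hg hsat
    obtain ⟨B, hB, hBs⟩ := ih U M hM w g hg hsat
    exact ⟨B, List.mem_cons_of_mem _ hB, hBs⟩
  | cL _ ih =>
    intro U M hM w g hg hsat
    refine ih U M hM w g hg ?_
    intro B hB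
    rcases List.mem_cons.mp hB with h | h
    · subst h; exact hsat _ (.head _)
    · exact hsat B h
  | cR _ ih =>
    intro U M hM w g hg hsat
    obtain ⟨B, hB, hBs⟩ := ih U M hM w g hg hsat
    rcases List.mem_cons.mp hB with h | h
    · subst h; exact ⟨B, .head _, hBs⟩
    · exact ⟨B, h, hBs⟩
  | @cut Γ Δ P S A _ _ ih1 ih2 =>
    intro U M hM w g hg hsat
    obtain ⟨B, hB, hBs⟩ := ih1 U M hM w g hg fun C hC =>
      hsat C (List.mem_append_left _ hC)
    rcases List.mem_cons.mp hB with rfl | hB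
    · have hsat2 : ∀ D ∈ B :: P, D.Sat M w g := by
        intro D hD
        rcases List.mem_cons.mp hD with rfl | hD
        · exact hBs
        · exact hsat D (List.mem_append_right _ hD)
      obtain ⟨C, hC, hCs⟩ := ih2 U M hM w g hg hsat2
      exact ⟨C, List.mem_append_right _ hC, hCs⟩
    · exact ⟨B, List.mem_append_left _ hB, hBs⟩
  | @impIR Θ A B hPers _ ih =>
    intro U M hM w g hg hsat
    refine ⟨.impI A B, by simp, fun v hv hAv => ?_⟩
    have hgv : ∀ x, g x ∈ M.D v := fun x => hM.dMono hv (hg x)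
    have hsat2 : ∀ D ∈ A :: Θ, D.Sat M v g := by
      intro D hD
      rcases List.mem_cons.mp hD with rfl | hD
      · exact hAv
      · exact sat_mono hM (hPers D hD) hv (hsat D hD)
    obtain ⟨C, hC, hCs⟩ := ih U M hM v g hgv hsat2
    simp at hC; exact hC ▸ hCs
  | @impIL Γ₁ Γ₂ Δ₁ Δ₂ A B _ _ ih1 ih2 =>
    intro U M hM w g hg hsat
    have himp : (Fm.impI A B).Sat M w g := hsat _ (.head _)
    obtain ⟨C, hC, hCs⟩ := ih1 U M hM w g hg fun D hD =>
      hsat D (List.mem_cons_of_mem _ (List.mem_append_left _ hD))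
    rcases List.mem_cons.mp hC with rfl | hC
    · have hsat2 : ∀ D ∈ B :: Γ₂, D.Sat M w g := by
        intro D hD
        rcases List.mem_cons.mp hD with rfl | hD
        · exact himp w (hM.refl w) hCs
        · exact hsat D (List.mem_cons_of_mem _ (List.mem_append_right _ hD))
      obtain ⟨E, hE, hEs⟩ := ih2 U M hM w g hg hsat2
      exact ⟨E, List.mem_append_right _ hE, hEs⟩
    · exact ⟨C, List.mem_append_left _ hC, hCs⟩
  | @impCR Γ Δ A B _ ih =>
    intro U M hM w g hg hsat
    by_cases hA : A.Sat M w g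
    · have hsat2 : ∀ D ∈ A :: Γ, D.Sat M w g := by
        intro D hD
        rcases List.mem_cons.mp hD with rfl | hD
        · exact hA
        · exact hsat D hD
      obtain ⟨C, hC, hCs⟩ := ih U M hM w g hg hsat2
      rcases List.mem_cons.mp hC with rfl | hC
      · exact ⟨.impC A C, .head _, fun _ => hCs⟩
      · exact ⟨C, List.mem_cons_of_mem _ hC, hCs⟩
    · exact ⟨.impC A B, .head _, fun h => absurd h hA⟩
  | @impCL Γ₁ Γ₂ Δ₁ Δ₂ A B _ _ ih1 ih2 =>
    intro U M hM w g hg hsat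
    have himp : (Fm.impC A B).Sat M w g := hsat _ (.head _)
    obtain ⟨C, hC, hCs⟩ := ih1 U M hM w g hg fun D hD =>
      hsat D (List.mem_cons_of_mem _ (List.mem_append_left _ hD))
    rcases List.mem_cons.mp hC with rfl | hC
    · have hsat2 : ∀ D ∈ B :: Γ₂, D.Sat M w g := by
        intro D hD
        rcases List.mem_cons.mp hD with rfl | hD
        · exact himp hCs
        · exact hsat D (List.mem_cons_of_mem _ (List.mem_append_right _ hD))
      obtain ⟨E, hE, hEs⟩ := ih2 U M hM w g hg hsat2
      exact ⟨E, List.mem_append_right _ hE, hEs⟩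
    · exact ⟨C, List.mem_append_left _ hC, hCs⟩
  | @andR Γ Δ A B _ _ ih1 ih2 =>
    intro U M hM w g hg hsat
    obtain ⟨C, hC, hCs⟩ := ih1 U M hM w g hg hsat
    rcases List.mem_cons.mp hC with rfl | hC
    · obtain ⟨E, hE, hEs⟩ := ih2 U M hM w g hg hsat
      rcases List.mem_cons.mp hE with rfl | hE
      · exact ⟨.and C E, .head _, hCs, hEs⟩
      · exact ⟨E, List.mem_cons_of_mem _ hE, hEs⟩
    · exact ⟨C, List.mem_cons_of_mem _ hC, hCs⟩
  | @andL1 Γ Δ A B _ ih =>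
    intro U M hM w g hg hsat
    refine ih U M hM w g hg fun D hD => ?_
    rcases List.mem_cons.mp hD with rfl | hD
    · exact (hsat _ (.head _)).1
    · exact hsat D (List.mem_cons_of_mem _ hD)
  | @andL2 Γ Δ A B _ ih =>
    intro U M hM w g hg hsat
    refine ih U M hM w g hg fun D hD => ?_
    rcases List.mem_cons.mp hD with rfl | hD
    · exact (hsat _ (.head _)).2
    · exact hsat D (List.mem_cons_of_mem _ hD)
  | @orR1 Γ Δ A B _ ih =>
    intro U M hM w g hg hsat
    obtain ⟨C, hC, hCs⟩ := ih U M hM w g hg hsat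
    rcases List.mem_cons.mp hC with rfl | hC
    · exact ⟨.or C B, .head _, Or.inl hCs⟩
    · exact ⟨C, List.mem_cons_of_mem _ hC, hCs⟩
  | @orR2 Γ Δ A B _ ih =>
    intro U M hM w g hg hsat
    obtain ⟨C, hC, hCs⟩ := ih U M hM w g hg hsat
    rcases List.mem_cons.mp hC with rfl | hC
    · exact ⟨.or A C, .head _, Or.inr hCs⟩
    · exact ⟨C, List.mem_cons_of_mem _ hC, hCs⟩
  | @orL Γ Δ A B _ _ ih1 ih2 =>
    intro U M hM w g hg hsat
    rcases hsat _ (.head _) with hA | hB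
    · refine ih1 U M hM w g hg fun D hD => ?_
      rcases List.mem_cons.mp hD with rfl | hD
      · exact hA
      · exact hsat D (List.mem_cons_of_mem _ hD)
    · refine ih2 U M hM w g hg fun D hD => ?_
      rcases List.mem_cons.mp hD with rfl | hD
      · exact hB
      · exact hsat D (List.mem_cons_of_mem _ hD)
  | @allIR Θ x z A hPers hFresh hFv hBv _ ih =>
    intro U M hM w g hg hsat
    refine ⟨.allI x A, by simp, fun v hv d hd => ?_⟩
    set g' := Function.update g z d with hg'
    have hgv : ∀ y, g' y ∈ M.D v := by
      intro y
      by_cases hy : y = z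
      · subst hy; simp [hg', hd]
      · simp [hg', Function.update_apply, hy]
        exact hM.dMono hv (hg y)
    have hsat2 : ∀ D ∈ Θ, D.Sat M v g' := by
      intro D hD
      have hDv : D.Sat M v g := sat_mono hM (hPers D hD) hv (hsat D hD)
      exact (sat_agree M D fun y hy => by
        have : y ≠ z := fun e => hFresh D hD (e ▸ hy)
        simp [hg', Function.update_apply, this]).mp hDv
    obtain ⟨C, hC, hCs⟩ := ih U M hM v g' hgv hsat2
    · simp at hC; subst hC
      have hzbv : ∀ y ∈ (Tm.var z).fv, y ∉ A.bv := by
        intro y hy; simp [Tm.fv] at hy; subst hy; exact hBv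
      rw [sat_subst M A x (.var z) g' v hzbv] at hCs
      have : (Tm.var z).val M g' = d := by simp [Tm.val, hg']
      rw [this] at hCs
      refine (sat_agree M A (g := Function.update g' x d)
        (g' := Function.update g x d) fun y hy => ?_).mp hCs
      by_cases hyx : y = x
      · subst hyx; simp
      · have hyz : y ≠ z := by
          intro e; subst e
          exact hFv ⟨hy, hyx⟩
        simp [Function.update_apply, hyx, hg', hyz]
  | @allIL Γ Δ x A t hBv _ ih =>
    intro U M hM w g hg hsat
    have hall : (Fm.allI x A).Sat M w g := hsat _ (.head _)
    refine ih U M hM w g hg fun D hD => ?_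
    rcases List.mem_cons.mp hD with rfl | hD
    · rw [sat_subst M A x t g w hBv]
      exact hall w (hM.refl w) _ (tm_val_mem hM hg t)
    · exact hsat D (List.mem_cons_of_mem _ hD)
  | @allCR Γ Δ x z A hFreshL hFreshR hFv hBv _ ih =>
    intro U M hM w g hg hsat
    by_cases hΔ : ∃ B ∈ Δ, B.Sat M w g
    · obtain ⟨B, hB, hBs⟩ := hΔ
      exact ⟨B, List.mem_cons_of_mem _ hB, hBs⟩
    · refine ⟨.allC x A, .head _, fun d hd => ?_⟩
      set g' := Function.update g z d with hg'
      have hgv : ∀ y, g' y ∈ M.D w := by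
        intro y
        by_cases hy : y = z
        · subst hy; simp [hg', hd]
        · simp [hg', Function.update_apply, hy]; exact hg y
      have hsat2 : ∀ D ∈ Γ, D.Sat M w g' := by
        intro D hD
        exact (sat_agree M D fun y hy => by
          have : y ≠ z := fun e => hFreshL D hD (e ▸ hy)
          simp [hg', Function.update_apply, this]).mp (hsat D hD)
      obtain ⟨C, hC, hCs⟩ := ih U M hM w g' hgv hsat2
      rcases List.mem_cons.mp hC with rfl | hC
      · have hzbv : ∀ y ∈ (Tm.var z).fv, y ∉ A.bv := by
          intro y hy; simp [Tm.fv] at hy; subst hy; exact hBv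
        rw [sat_subst M A x (.var z) g' w hzbv] at hCs
        have : (Tm.var z).val M g' = d := by simp [Tm.val, hg']
        rw [this] at hCs
        refine (sat_agree M A (g := Function.update g' x d)
          (g' := Function.update g x d) fun y hy => ?_).mp hCs
        by_cases hyx : y = x
        · subst hyx; simp
        · have hyz : y ≠ z := fun e => (e ▸ hFv) ⟨hy, hyx⟩
          simp [Function.update_apply, hyx, hg', hyz]
      · exfalso
        refine hΔ ⟨C, hC, ?_⟩
        exact (sat_agree M C fun y hy => by
          have : y ≠ z := fun e => hFreshR C hC (e ▸ hy)
          simp [hg', Function.update_apply, this]).mpr hCs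
  | @allCL Γ Δ x A t hBv _ ih =>
    intro U M hM w g hg hsat
    have hall : (Fm.allC x A).Sat M w g := hsat _ (.head _)
    refine ih U M hM w g hg fun D hD => ?_
    rcases List.mem_cons.mp hD with rfl | hD
    · rw [sat_subst M A x t g w hBv]
      exact hall _ (tm_val_mem hM hg t)
    · exact hsat D (List.mem_cons_of_mem _ hD)
  | @exR Γ Δ x A t hBv _ ih =>
    intro U M hM w g hg hsat
    obtain ⟨C, hC, hCs⟩ := ih U M hM w g hg hsat
    rcases List.mem_cons.mp hC with rfl | hC
    · rw [sat_subst M A x t g w hBv] at hCs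
      exact ⟨.ex x A, .head _, _, tm_val_mem hM hg t, hCs⟩
    · exact ⟨C, List.mem_cons_of_mem _ hC, hCs⟩
  | @exL Γ Δ x z A hFreshL hFreshR hFv hBv _ ih =>
    intro U M hM w g hg hsat
    obtain ⟨d, hd, hdSat⟩ := hsat _ (.head _)
    set g' := Function.update g z d with hg'
    have hgv : ∀ y, g' y ∈ M.D w := by
      intro y
      by_cases hy : y = z
      · subst hy; simp [hg', hd]
      · simp [hg', Function.update_apply, hy]; exact hg y
    have hsat2 : ∀ D ∈ Fm.subst A x (.var z) :: Γ, D.Sat M w g' := by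
      intro D hD
      rcases List.mem_cons.mp hD with rfl | hD
      · have hzbv : ∀ y ∈ (Tm.var z).fv, y ∉ A.bv := by
          intro y hy; simp [Tm.fv] at hy; subst hy; exact hBv
        rw [sat_subst M A x (.var z) g' w hzbv]
        have : (Tm.var z).val M g' = d := by simp [Tm.val, hg']
        rw [this]
        refine (sat_agree M A (g := Function.update g x d)
          (g' := Function.update g' x d) fun y hy => ?_).mp hdSat
        by_cases hyx : y = x
        · subst hyx; simp
        · have hyz : y ≠ z := fun e => (e ▸ hFv) ⟨hy, hyx⟩
          simp [Function.update_apply, hyx, hg', hyz]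
      · exact (sat_agree M D fun y hy => by
          have : y ≠ z := fun e => hFreshL D hD (e ▸ hy)
          simp [hg', Function.update_apply, this]).mp (hsat D (List.mem_cons_of_mem _ hD))
    obtain ⟨C, hC, hCs⟩ := ih U M hM w g' hgv hsat2
    refine ⟨C, hC, ?_⟩
    exact (sat_agree M C fun y hy => by
      have : y ≠ z := fun e => hFreshR C hC (e ▸ hy)
      simp [hg', Function.update_apply, this]).mpr hCs
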